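/- Let L : ℝ^p → ℝ be differentiable with β-Lipschitz gradient (β > 0) and bounded below by L*. On a probability space, let (w_k)_{k≥0} and (ε_k)_{k≥0} be random vectors in ℝ^p and (g_k)_{k≥0} random vectors in ℝ^p such that: ‖ε_k‖₂ ≤ ρ almost surely; conditionally on (w_k, ε_k), g_k is an unbiased estimator of ∇L(w_k + ε_k), i.e. E[g_k | w_k, ε_k] = ∇L(w_k + ε_k); the conditional variance satisfies E[‖g_k - ∇L(w_k + ε_k)‖₂² | w_k, ε_k] ≤ σ²; and w_{k+1} = w_k - η g_k with 0 < η ≤ 1/(4β), while w_0 is deterministic. Then for every K ≥ 1, (1/K) ∑_{k=0}^{K-1} E[‖∇L(w_k)‖₂²] ≤ 4 (L(w_0) - L*)/(η K) + 3 β² ρ² + 2 η β σ². -/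

import Mathlib

open MeasureTheory

open scoped RealInnerProductSpace

set_option maxHeartbeats 1000000
open MeasureTheory
open scoped RealInnerProductSpace

section Aux

lemma coord_abs_le_norm {p : ℕ} (x : EuclideanSpace ℝ (Fin p)) (i : Fin p) :
    |x i| ≤ ‖x‖ := by
  have := abs_real_inner_le_norm (EuclideanSpace.single i (1:ℝ)) x
  simpa [EuclideanSpace.inner_single_left, EuclideanSpace.norm_single] using this

lemma condexp_clm {α E F : Type*} {m m0 : MeasurableSpace α}
    [NormedAddCommGroup E] [NormedSpace ℝ E] [CompleteSpace E]
    [NormedAddCommGroup F] [NormedSpace ℝ F] [CompleteSpace F]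
    {μ : @Measure α m0} (hm : m ≤ m0) [SigmaFinite (μ.trim hm)]
    (T : E →L[ℝ] F) {f : α → E} (hf : Integrable f μ) :
    (fun ω => T ((μ[f|m]) ω)) =ᵐ[μ] μ[fun ω => T (f ω)|m] := by
  refine ae_eq_condExp_of_forall_setIntegral_eq hm (T.integrable_comp hf)
    (fun s _ _ => (T.integrable_comp integrable_condExp).integrableOn)
    (fun s hs hμs => ?_) ?_
  · rw [T.integral_comp_comm integrable_condExp.integrableOn,
      setIntegral_condExp hm hf hs, T.integral_comp_comm hf.integrableOn]
  · exact StronglyMeasurable.aestronglyMeasurable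
      (T.continuous.comp_stronglyMeasurable stronglyMeasurable_condExp)

lemma coord_mul_integrable {α : Type*} {m0 : MeasurableSpace α} {μ : Measure α} {p : ℕ}
    {X Y : α → EuclideanSpace ℝ (Fin p)}
    (hXm : AEStronglyMeasurable X μ) (hYm : AEStronglyMeasurable Y μ)
    (hX2 : Integrable (fun ω => ‖X ω‖ ^ 2) μ) (hY2 : Integrable (fun ω => ‖Y ω‖ ^ 2) μ)
    (i : Fin p) : Integrable (fun ω => X ω i * Y ω i) μ := by
  have hXi : AEStronglyMeasurable (fun ω => X ω i) μ :=
    (EuclideanSpace.proj i : EuclideanSpace ℝ (Fin p) →L[ℝ] ℝ).continuous.comp_aestronglyMeasurable hXm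
  have hYi : AEStronglyMeasurable (fun ω => Y ω i) μ :=
    (EuclideanSpace.proj i : EuclideanSpace ℝ (Fin p) →L[ℝ] ℝ).continuous.comp_aestronglyMeasurable hYm
  refine (hX2.add hY2).mono' (hXi.mul hYi) ?_
  filter_upwards with ω
  have h1 := coord_abs_le_norm (X ω) i
  have h2 := coord_abs_le_norm (Y ω) i
  have h3 : |X ω i * Y ω i| = |X ω i| * |Y ω i| := abs_mul _ _
  have h4 : (0:ℝ) ≤ ‖X ω‖ := norm_nonneg _
  have h5 : (0:ℝ) ≤ ‖Y ω‖ := norm_nonneg _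
  rw [Real.norm_eq_abs]
  simp only [Pi.add_apply]
  nlinarith [abs_nonneg (X ω i), abs_nonneg (Y ω i), mul_le_mul h1 h2 (abs_nonneg _) h4]

/-- Cross-term identity: `∫ ⟪X, Y⟫ = ∫ ⟪X, h⟫` when `X` is `m`-measurable and
`μ[Y|m] = h` a.e. -/
lemma integral_inner_condexp {α : Type*} {m m0 : MeasurableSpace α}
    {μ : @Measure α m0} [IsProbabilityMeasure μ] (hm : m ≤ m0) {p : ℕ}
    {X Y h : α → EuclideanSpace ℝ (Fin p)}
    (hX : StronglyMeasurable[m] X) (hYint : Integrable Y μ)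
    (hhm : AEStronglyMeasurable h μ)
    (hcond : μ[Y|m] =ᵐ[μ] h)
    (hX2 : Integrable (fun ω => ‖X ω‖ ^ 2) μ)
    (hY2 : Integrable (fun ω => ‖Y ω‖ ^ 2) μ)
    (hh2 : Integrable (fun ω => ‖h ω‖ ^ 2) μ) :
    ∫ ω, ⟪X ω, Y ω⟫ ∂μ = ∫ ω, ⟪X ω, h ω⟫ ∂μ := by
  have hXm0 : AEStronglyMeasurable X μ := (hX.mono hm).aestronglyMeasurable
  have hYm0 : AEStronglyMeasurable Y μ := hYint.aestronglyMeasurable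
  have hXY : ∀ i, Integrable (fun ω => X ω i * Y ω i) μ :=
    coord_mul_integrable hXm0 hYm0 hX2 hY2
  have hXh : ∀ i, Integrable (fun ω => X ω i * h ω i) μ :=
    coord_mul_integrable hXm0 hhm hX2 hh2
  have hinner : ∀ (Z : α → EuclideanSpace ℝ (Fin p)) ω,
      ⟪X ω, Z ω⟫ = ∑ i, X ω i * Z ω i := by
    intro Z ω
    simp [PiLp.inner_apply, RCLike.inner_apply, mul_comm]
  calc ∫ ω, ⟪X ω, Y ω⟫ ∂μ = ∑ i, ∫ ω, X ω i * Y ω i ∂μ := by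
        simp_rw [hinner Y]
        exact integral_finset_sum _ fun i _ => hXY i
    _ = ∑ i, ∫ ω, X ω i * h ω i ∂μ := by
        refine Finset.sum_congr rfl fun i _ => ?_
        have hXi : StronglyMeasurable[m] (fun ω => X ω i) :=
          (EuclideanSpace.proj i : EuclideanSpace ℝ (Fin p) →L[ℝ] ℝ).continuous.comp_stronglyMeasurable hX
        have hYi : Integrable (fun ω => Y ω i) μ :=
          (EuclideanSpace.proj i : EuclideanSpace ℝ (Fin p) →L[ℝ] ℝ).integrable_comp hYint
        have hcondi : μ[fun ω => Y ω i|m] =ᵐ[μ] fun ω => h ω i := by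
          have h1 := (condexp_clm hm
            (EuclideanSpace.proj i : EuclideanSpace ℝ (Fin p) →L[ℝ] ℝ) hYint).symm
          refine h1.trans ?_
          filter_upwards [hcond] with ω hω
          simp [hω]
        have hmul := condExp_mul_of_stronglyMeasurable_left hXi
          (by exact hXY i) hYi
        calc ∫ ω, X ω i * Y ω i ∂μ
            = ∫ ω, (μ[(fun ω => X ω i) * fun ω => Y ω i|m]) ω ∂μ := by
              rw [integral_condExp hm]; rfl
          _ = ∫ ω, X ω i * h ω i ∂μ := by
              refine integral_congr_ae ?_
              filter_upwards [hmul, hcondi] with ω h1 h2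
              rw [h1]; simp [h2]
    _ = ∫ ω, ⟪X ω, h ω⟫ ∂μ := by
        simp_rw [hinner h]
        exact (integral_finset_sum _ fun i _ => hXh i).symm

lemma descent_lemma {E : Type*} [NormedAddCommGroup E] [InnerProductSpace ℝ E] [CompleteSpace E]
    (L : E → ℝ) (β : ℝ) (hβ : 0 ≤ β) (hdiff : Differentiable ℝ L)
    (hsmooth : ∀ v v', ‖gradient L v - gradient L v'‖ ≤ β * ‖v - v'‖)
    (x y : E) :
    L y ≤ L x + ⟪gradient L x, y - x⟫ + β / 2 * ‖y - x‖ ^ 2 := by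
  set v := y - x with hv
  set φ : ℝ → ℝ := fun t => L (x + t • v) - t * ⟪gradient L x, v⟫
    - β / 2 * ‖v‖ ^ 2 * t ^ 2 with hφ
  have hderiv : ∀ t : ℝ, HasDerivAt φ
      (⟪gradient L (x + t • v), v⟫ - ⟪gradient L x, v⟫ - β / 2 * ‖v‖ ^ 2 * (2 * t)) t := by
    intro t
    have hc : HasDerivAt (fun t : ℝ => x + t • v) v t := by
      simpa using ((hasDerivAt_id t).smul_const v).const_add x
    have h1 : HasDerivAt (fun t : ℝ => L (x + t • v))
        ⟪gradient L (x + t • v), v⟫ t := by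
      have := ((hdiff (x + t • v)).hasGradientAt.hasFDerivAt).comp_hasDerivAt t hc
      simpa [InnerProductSpace.toDual_apply_apply, Function.comp_def] using this
    have h2 : HasDerivAt (fun t : ℝ => t * ⟪gradient L x, v⟫)
        ⟪gradient L x, v⟫ t := by simpa using (hasDerivAt_id t).mul_const _
    have h3 : HasDerivAt (fun t : ℝ => β / 2 * ‖v‖ ^ 2 * t ^ 2)
        (β / 2 * ‖v‖ ^ 2 * (2 * t)) t := by
      have := (hasDerivAt_pow 2 t).const_mul (β / 2 * ‖v‖ ^ 2)
      convert this using 1 <;> first | rfl | ring_nf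
    exact (h1.sub h2).sub h3
  have hdφ : Differentiable ℝ φ := fun t => (hderiv t).differentiableAt
  have hanti : AntitoneOn φ (Set.Icc 0 1) := by
    refine antitoneOn_of_deriv_nonpos (convex_Icc 0 1) hdφ.continuous.continuousOn
      (hdφ.differentiableOn) ?_
    intro t ht
    rw [interior_Icc] at ht
    rw [(hderiv t).deriv]
    have h4 : ⟪gradient L (x + t • v) - gradient L x, v⟫
        ≤ ‖gradient L (x + t • v) - gradient L x‖ * ‖v‖ := real_inner_le_norm _ _
    have h5 : ‖gradient L (x + t • v) - gradient L x‖ ≤ β * (t * ‖v‖) := by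
      have := hsmooth (x + t • v) x
      simpa [norm_smul, abs_of_pos ht.1] using this
    have h6 : ⟪gradient L (x + t • v) - gradient L x, v⟫
        = ⟪gradient L (x + t • v), v⟫ - ⟪gradient L x, v⟫ := inner_sub_left _ _ _
    have h7 : (0:ℝ) ≤ ‖v‖ := norm_nonneg _
    nlinarith [mul_le_mul_of_nonneg_right h5 h7]
  have h01 : φ 1 ≤ φ 0 := hanti (by norm_num) (by norm_num) (by norm_num)
  have e1 : x + (1:ℝ) • v = y := by rw [one_smul, hv]; abel
  have e0 : x + (0:ℝ) • v = x := by simp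
  simp only [hφ, e1, e0] at h01
  simp only [one_mul, one_pow, zero_mul, mul_zero, sub_zero, mul_one] at h01
  linarith

end Aux

/-- Nonconvex convergence of stochastic SAST: `L` is
differentiable with `β`-Lipschitz gradient (`β > 0`) and bounded below by
`L*`; the perturbations satisfy `‖ε_k‖ ≤ ρ` a.s.; conditionally on
`(w_k, ε_k)` the stochastic gradient `g_k` is unbiased for `∇L(w_k + ε_k)`
with conditional variance at most `σ²`; the iterates follow
`w_{k+1} = w_k - η g_k` with `0 < η ≤ 1/(4β)` from a deterministic `w_0`.
Then `(1/K) ∑_{k<K} E‖∇L(w_k)‖² ≤ 4(L(w_0)-L*)/(ηK) + 3β²ρ² + 2ηβσ²`. -/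
theorem sast_stochastic_convergence
    (p : ℕ) (hp : 1 ≤ p)
    (L : EuclideanSpace ℝ (Fin p) → ℝ) (β ρ σ η Lstar : ℝ)
    (hβ : 0 < β) (hρ : 0 ≤ ρ) (hσ : 0 ≤ σ)
    (hdiff : Differentiable ℝ L)
    (hsmooth : ∀ v v', ‖gradient L v - gradient L v'‖ ≤ β * ‖v - v'‖)
    (hbdd : ∀ v, Lstar ≤ L v)
    (hη0 : 0 < η) (hη : η ≤ 1 / (4 * β))
    {Ω : Type} [MeasurableSpace Ω] (μ : Measure Ω) [IsProbabilityMeasure μ]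
    (w ε g : ℕ → Ω → EuclideanSpace ℝ (Fin p))
    (hw_meas : ∀ k, Measurable (w k))
    (hε_meas : ∀ k, Measurable (ε k))
    (hg_meas : ∀ k, Measurable (g k))
    (hg_int : ∀ k, Integrable (g k) μ)
    (hsq_int : ∀ k,
      Integrable (fun ω => ‖g k ω - gradient L (w k ω + ε k ω)‖ ^ 2) μ)
    (w0 : EuclideanSpace ℝ (Fin p)) (hw0 : w 0 = fun _ => w0)
    (hε_bdd : ∀ k, ∀ᵐ ω ∂μ, ‖ε k ω‖ ≤ ρ)
    (hunbiased : ∀ k,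
      μ[g k | MeasurableSpace.comap (fun ω => (w k ω, ε k ω)) inferInstance]
        =ᵐ[μ] fun ω => gradient L (w k ω + ε k ω))
    (hvar : ∀ k, ∀ᵐ ω ∂μ,
      (μ[(fun ω' => ‖g k ω' - gradient L (w k ω' + ε k ω')‖ ^ 2)
        | MeasurableSpace.comap (fun ω' => (w k ω', ε k ω')) inferInstance]) ω
        ≤ σ ^ 2)
    (hupdate : ∀ k ω, w (k + 1) ω = w k ω - η • g k ω) :
    ∀ K : ℕ, 1 ≤ K →
      (1 / (K : ℝ)) * ∑ k ∈ Finset.range K,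
          (∫ ω, ‖gradient L (w k ω)‖ ^ 2 ∂μ)
        ≤ 4 * (L w0 - Lstar) / (η * K) + 3 * β ^ 2 * ρ ^ 2
          + 2 * η * β * σ ^ 2 := by
  -- notation
  set G : EuclideanSpace ℝ (Fin p) → EuclideanSpace ℝ (Fin p) := gradient L with hGdef
  have hβη : β * η ≤ 1 / 4 := by
    rw [le_div_iff₀ (by positivity : (0:ℝ) < 4 * β)] at hη
    linarith
  have hGcont : Continuous G := by
    have hl : LipschitzWith (Real.toNNReal β) G := by
      apply LipschitzWith.of_dist_le_mul
      intro a b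
      rw [dist_eq_norm, dist_eq_norm]
      simpa [Real.coe_toNNReal β hβ.le] using hsmooth a b
    exact hl.continuous
  have hGnorm : ∀ v, ‖G v‖ ≤ ‖G 0‖ + β * ‖v‖ := by
    intro v
    have h1 := hsmooth v 0
    have h2 := norm_sub_norm_le (G v) (G 0)
    simp only [sub_zero] at h1
    linarith
  -- the sub-σ-algebras
  set m : ℕ → MeasurableSpace Ω :=
    fun k => MeasurableSpace.comap (fun ω => (w k ω, ε k ω)) inferInstance with hmdef
  have hm : ∀ k, m k ≤ ‹MeasurableSpace Ω› :=
    fun k => ((hw_meas k).prodMk (hε_meas k)).comap_le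
  have hpair : ∀ k, Measurable[m k] fun ω => (w k ω, ε k ω) :=
    fun k => Measurable.of_comap_le le_rfl
  have hwm : ∀ k, Measurable[m k] (w k) := fun k => measurable_fst.comp (hpair k)
  have hwεm : ∀ k, Measurable[m k] fun ω => w k ω + ε k ω :=
    fun k => (measurable_fst.add measurable_snd).comp (hpair k)
  have hXw : ∀ k, StronglyMeasurable[m k] fun ω => G (w k ω) :=
    fun k => (hGcont.measurable.comp (hwm k)).stronglyMeasurable
  have hXwε : ∀ k, StronglyMeasurable[m k] fun ω => G (w k ω + ε k ω) :=
    fun k => (hGcont.measurable.comp (hwεm k)).stronglyMeasurable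
  -- plain measurability
  have hGw_aesm : ∀ k, AEStronglyMeasurable (fun ω => G (w k ω)) μ :=
    fun k => (hGcont.measurable.comp (hw_meas k)).aestronglyMeasurable
  have hGwε_aesm : ∀ k, AEStronglyMeasurable (fun ω => G (w k ω + ε k ω)) μ :=
    fun k => (hGcont.measurable.comp ((hw_meas k).add (hε_meas k))).aestronglyMeasurable
  have hsqm : ∀ (f : Ω → EuclideanSpace ℝ (Fin p)), AEStronglyMeasurable f μ →
      AEStronglyMeasurable (fun ω => ‖f ω‖ ^ 2) μ :=
    fun f hf => (continuous_pow 2).comp_aestronglyMeasurable hf.norm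
  -- integrability of ‖w k‖², by induction, together with consequences
  have IG : ∀ k, Integrable (fun ω => ‖w k ω‖ ^ 2) μ →
      Integrable (fun ω => ‖G (w k ω)‖ ^ 2) μ := by
    intro k Iwk
    refine ((integrable_const (2 * ‖G 0‖ ^ 2)).add (Iwk.const_mul (2 * β ^ 2))).mono'
      (hsqm _ (hGw_aesm k)) ?_
    filter_upwards with ω
    have h1 := hGnorm (w k ω)
    have h2 : (0:ℝ) ≤ ‖G (w k ω)‖ := norm_nonneg _
    have h3 : (0:ℝ) ≤ ‖w k ω‖ := norm_nonneg _
    rw [Real.norm_eq_abs, abs_of_nonneg (by positivity)]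
    simp only [Pi.add_apply]
    nlinarith [pow_le_pow_left₀ h2 h1 2, sq_nonneg (‖G 0‖ - β * ‖w k ω‖),
      mul_nonneg hβ.le h3]
  have IGε : ∀ k, Integrable (fun ω => ‖G (w k ω)‖ ^ 2) μ →
      Integrable (fun ω => ‖G (w k ω + ε k ω)‖ ^ 2) μ := by
    intro k IGk
    refine ((IGk.const_mul 2).add (integrable_const (2 * β ^ 2 * ρ ^ 2))).mono'
      (hsqm _ (hGwε_aesm k)) ?_
    filter_upwards [hε_bdd k] with ω hω
    have h1 := hsmooth (w k ω + ε k ω) (w k ω)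
    rw [add_sub_cancel_left] at h1
    have h2 := norm_sub_norm_le (G (w k ω + ε k ω)) (G (w k ω))
    have h3 : (0:ℝ) ≤ ‖G (w k ω)‖ := norm_nonneg _
    have h4 : (0:ℝ) ≤ ‖G (w k ω + ε k ω)‖ := norm_nonneg _
    have h5 : (0:ℝ) ≤ ‖ε k ω‖ := norm_nonneg _
    have hb : ‖G (w k ω + ε k ω)‖ ≤ ‖G (w k ω)‖ + β * ρ := by
      nlinarith [mul_le_mul_of_nonneg_left hω hβ.le]
    rw [Real.norm_eq_abs, abs_of_nonneg (by positivity)]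
    simp only [Pi.add_apply]
    nlinarith [pow_le_pow_left₀ h4 hb 2, sq_nonneg (‖G (w k ω)‖ - β * ρ),
      mul_nonneg hβ.le hρ]
  have Ig : ∀ k, Integrable (fun ω => ‖G (w k ω + ε k ω)‖ ^ 2) μ →
      Integrable (fun ω => ‖g k ω‖ ^ 2) μ := by
    intro k IGεk
    refine (((hsq_int k).const_mul 2).add (IGεk.const_mul 2)).mono'
      (hsqm _ (hg_meas k).aestronglyMeasurable) ?_
    filter_upwards with ω
    have h1 := norm_sub_norm_le (g k ω) (G (w k ω + ε k ω))
    have h2 : (0:ℝ) ≤ ‖g k ω‖ := norm_nonneg _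
    have h3 : (0:ℝ) ≤ ‖g k ω - G (w k ω + ε k ω)‖ := norm_nonneg _
    have h4 : (0:ℝ) ≤ ‖G (w k ω + ε k ω)‖ := norm_nonneg _
    have hb : ‖g k ω‖ ≤ ‖g k ω - G (w k ω + ε k ω)‖ + ‖G (w k ω + ε k ω)‖ := by
      linarith
    rw [Real.norm_eq_abs, abs_of_nonneg (by positivity)]
    simp only [Pi.add_apply]
    nlinarith [pow_le_pow_left₀ h2 hb 2,
      sq_nonneg (‖g k ω - G (w k ω + ε k ω)‖ - ‖G (w k ω + ε k ω)‖)]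
  have Iw : ∀ k, Integrable (fun ω => ‖w k ω‖ ^ 2) μ := by
    intro k
    induction k with
    | zero =>
      rw [hw0]
      exact integrable_const _
    | succ k ih =>
      have Igk := Ig k (IGε k (IG k ih))
      refine ((ih.const_mul 2).add (Igk.const_mul (2 * η ^ 2))).mono'
        (hsqm _ (hw_meas (k + 1)).aestronglyMeasurable) ?_
      filter_upwards with ω
      have h1 : ‖w (k + 1) ω‖ ≤ ‖w k ω‖ + η * ‖g k ω‖ := by
        rw [hupdate k ω]
        refine (norm_sub_le _ _).trans ?_
        rw [norm_smul, Real.norm_eq_abs, abs_of_pos hη0]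
      have h2 : (0:ℝ) ≤ ‖w (k+1) ω‖ := norm_nonneg _
      have h3 : (0:ℝ) ≤ ‖w k ω‖ := norm_nonneg _
      have h4 : (0:ℝ) ≤ ‖g k ω‖ := norm_nonneg _
      rw [Real.norm_eq_abs, abs_of_nonneg (by positivity)]
      simp only [Pi.add_apply]
      nlinarith [pow_le_pow_left₀ h2 h1 2, sq_nonneg (‖w k ω‖ - η * ‖g k ω‖),
        mul_nonneg hη0.le h4]
  have IGk : ∀ k, Integrable (fun ω => ‖G (w k ω)‖ ^ 2) μ := fun k => IG k (Iw k)
  have IGεk : ∀ k, Integrable (fun ω => ‖G (w k ω + ε k ω)‖ ^ 2) μ := fun k => IGε k (IGk k)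
  have Igk : ∀ k, Integrable (fun ω => ‖g k ω‖ ^ 2) μ := fun k => Ig k (IGεk k)
  -- inner products are integrable
  have Iinner : ∀ (X Y : Ω → EuclideanSpace ℝ (Fin p)),
      AEStronglyMeasurable X μ → AEStronglyMeasurable Y μ →
      Integrable (fun ω => ‖X ω‖ ^ 2) μ → Integrable (fun ω => ‖Y ω‖ ^ 2) μ →
      Integrable (fun ω => ⟪X ω, Y ω⟫) μ := by
    intro X Y hXm hYm hX2 hY2
    refine (hX2.add hY2).mono' (hXm.inner hYm) ?_
    filter_upwards with ω
    have h1 := abs_real_inner_le_norm (X ω) (Y ω)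
    have h2 : (0:ℝ) ≤ ‖X ω‖ := norm_nonneg _
    have h3 : (0:ℝ) ≤ ‖Y ω‖ := norm_nonneg _
    rw [Real.norm_eq_abs]
    simp only [Pi.add_apply]
    nlinarith
  -- integrability of L ∘ w k
  have IL : ∀ k, Integrable (fun ω => L (w k ω)) μ := by
    intro k
    refine ((integrable_const (|L 0| + ‖G 0‖)).add
      ((Iw k).const_mul (‖G 0‖ + 3 * β / 2))).mono'
      ((hdiff.continuous.measurable.comp (hw_meas k)).aestronglyMeasurable) ?_
    filter_upwards with ω
    set v := w k ω
    have h1 := descent_lemma L β hβ.le hdiff hsmooth 0 v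
    have h2 := descent_lemma L β hβ.le hdiff hsmooth v 0
    simp only [sub_zero, zero_sub, norm_neg] at h1 h2
    have h3 : ⟪G 0, v⟫ ≤ ‖G 0‖ * ‖v‖ := real_inner_le_norm _ _
    have h3' : -(‖G 0‖ * ‖v‖) ≤ ⟪G 0, v⟫ := by
      have := abs_real_inner_le_norm (G 0) v; rw [abs_le] at this; exact this.1
    rw [inner_neg_right] at h2
    have h4 : -(‖G v‖ * ‖v‖) ≤ ⟪G v, v⟫ := by
      have := abs_real_inner_le_norm (G v) v; rw [abs_le] at this; exact this.1
    have h5 := hGnorm v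
    have h6 : (0:ℝ) ≤ ‖v‖ := norm_nonneg _
    have h7 : (0:ℝ) ≤ ‖G v‖ := norm_nonneg _
    have h8 : ‖v‖ ≤ 1 + ‖v‖ ^ 2 := by nlinarith
    rw [Real.norm_eq_abs, abs_le]
    simp only [Pi.add_apply]
    constructor
    · nlinarith [neg_abs_le (L 0), le_abs_self (L 0),
        mul_le_mul_of_nonneg_left h8 (norm_nonneg (G 0)),
        mul_le_mul_of_nonneg_right h5 h6]
    · nlinarith [neg_abs_le (L 0), le_abs_self (L 0),
        mul_le_mul_of_nonneg_left h8 (norm_nonneg (G 0)),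
        mul_le_mul_of_nonneg_right h5 h6]
  -- abbreviations
  set N : ℕ → ℝ := fun k => ∫ ω, ‖G (w k ω)‖ ^ 2 ∂μ with hNdef
  have hNnonneg : ∀ k, 0 ≤ N k :=
    fun k => integral_nonneg fun ω => by positivity
  set c2 : ℝ := 3 * η / 4 * (β ^ 2 * ρ ^ 2) + β * η ^ 2 / 2 * σ ^ 2 with hc2def
  -- per-step inequality
  have step : ∀ k, ∫ ω, L (w (k+1) ω) ∂μ
      ≤ ∫ ω, L (w k ω) ∂μ - η / 4 * N k + c2 := by
    intro k
    have hh_aesm : AEStronglyMeasurable (fun ω => G (w k ω + ε k ω)) μ := hGwε_aesm k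
    -- descent pointwise
    have hpt : ∀ ω, L (w (k+1) ω)
        ≤ L (w k ω) - η * ⟪G (w k ω), g k ω⟫ + β * η ^ 2 / 2 * ‖g k ω‖ ^ 2 := by
      intro ω
      have hd := descent_lemma L β hβ.le hdiff hsmooth (w k ω) (w (k+1) ω)
      have e : w (k+1) ω - w k ω = -(η • g k ω) := by
        rw [hupdate k ω]; abel
      rw [e, inner_neg_right, real_inner_smul_right, norm_neg, norm_smul,
        Real.norm_eq_abs, abs_of_pos hη0, mul_pow] at hd
      nlinarith [hd]
    -- integrate
    have hIin : Integrable (fun ω => ⟪G (w k ω), g k ω⟫) μ :=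
      Iinner _ _ (hGw_aesm k) (hg_meas k).aestronglyMeasurable (IGk k) (Igk k)
    have hA : Integrable (fun ω => L (w k ω) - η * ⟪G (w k ω), g k ω⟫) μ :=
      (IL k).sub (hIin.const_mul η)
    have hB : Integrable (fun ω => β * η ^ 2 / 2 * ‖g k ω‖ ^ 2) μ :=
      (Igk k).const_mul _
    have hint : ∫ ω, L (w (k+1) ω) ∂μ
        ≤ ∫ ω, L (w k ω) ∂μ - η * (∫ ω, ⟪G (w k ω), g k ω⟫ ∂μ)
          + β * η ^ 2 / 2 * (∫ ω, ‖g k ω‖ ^ 2 ∂μ) := by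
      have h1 : ∫ ω, L (w (k+1) ω) ∂μ
          ≤ ∫ ω, (L (w k ω) - η * ⟪G (w k ω), g k ω⟫
              + β * η ^ 2 / 2 * ‖g k ω‖ ^ 2) ∂μ :=
        integral_mono (IL (k+1)) (hA.add hB) hpt
      rwa [integral_add hA hB, integral_sub (IL k) (hIin.const_mul η),
        integral_const_mul, integral_const_mul] at h1
    -- cross term
    have hcross : ∫ ω, ⟪G (w k ω), g k ω⟫ ∂μ
        = ∫ ω, ⟪G (w k ω), G (w k ω + ε k ω)⟫ ∂μ :=
      integral_inner_condexp (hm k) (hXw k) (hg_int k) hh_aesm (hunbiased k)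
        (IGk k) (Igk k) (IGεk k)
    -- lower bound on the cross term
    have hI1 : η / 2 * N k - η / 2 * (β ^ 2 * ρ ^ 2)
        ≤ η * ∫ ω, ⟪G (w k ω), G (w k ω + ε k ω)⟫ ∂μ := by
      have hlow : ∀ᵐ ω ∂μ, 1 / 2 * ‖G (w k ω)‖ ^ 2 - 1 / 2 * (β ^ 2 * ρ ^ 2)
          ≤ ⟪G (w k ω), G (w k ω + ε k ω)⟫ := by
        filter_upwards [hε_bdd k] with ω hω
        have h1 := hsmooth (w k ω + ε k ω) (w k ω)
        rw [add_sub_cancel_left] at h1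
        have h2 : -(‖G (w k ω)‖ * ‖G (w k ω + ε k ω) - G (w k ω)‖)
            ≤ ⟪G (w k ω), G (w k ω + ε k ω) - G (w k ω)⟫ := by
          have := abs_real_inner_le_norm (G (w k ω)) (G (w k ω + ε k ω) - G (w k ω))
          rw [abs_le] at this; exact this.1
        have h3 : ⟪G (w k ω), G (w k ω + ε k ω)⟫
            = ⟪G (w k ω), G (w k ω)⟫
              + ⟪G (w k ω), G (w k ω + ε k ω) - G (w k ω)⟫ := by
          rw [← inner_add_right]; congr 1; abel
        rw [real_inner_self_eq_norm_sq] at h3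
        have h4 : ‖G (w k ω + ε k ω) - G (w k ω)‖ ≤ β * ρ :=
          h1.trans (mul_le_mul_of_nonneg_left hω hβ.le)
        have h5 : (0:ℝ) ≤ ‖G (w k ω)‖ := norm_nonneg _
        have h6 : (0:ℝ) ≤ ‖G (w k ω + ε k ω) - G (w k ω)‖ := norm_nonneg _
        nlinarith [mul_le_mul_of_nonneg_left h4 h5, sq_nonneg (‖G (w k ω)‖ - β * ρ),
          mul_nonneg hβ.le hρ]
      have hImono : ∫ ω, (1 / 2 * ‖G (w k ω)‖ ^ 2 - 1 / 2 * (β ^ 2 * ρ ^ 2)) ∂μ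
          ≤ ∫ ω, ⟪G (w k ω), G (w k ω + ε k ω)⟫ ∂μ :=
        integral_mono_ae (((IGk k).const_mul (1/2)).sub (integrable_const _))
          (Iinner _ _ (hGw_aesm k) hh_aesm (IGk k) (IGεk k)) hlow
      rw [integral_sub ((IGk k).const_mul (1/2)) (integrable_const _),
        integral_const_mul, integral_const, probReal_univ,
        one_smul] at hImono
      have := mul_le_mul_of_nonneg_left hImono hη0.le
      calc η / 2 * N k - η / 2 * (β ^ 2 * ρ ^ 2)
          = η * (1 / 2 * N k - 1 / 2 * (β ^ 2 * ρ ^ 2)) := by ring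
        _ ≤ η * ∫ ω, ⟪G (w k ω), G (w k ω + ε k ω)⟫ ∂μ := this
    -- second moment bound
    have hQ : ∫ ω, ‖g k ω‖ ^ 2 ∂μ ≤ σ ^ 2 + (2 * N k + 2 * (β ^ 2 * ρ ^ 2)) := by
      have hIgh : Integrable
          (fun ω => ⟪G (w k ω + ε k ω), g k ω - G (w k ω + ε k ω)⟫) μ :=
        Iinner _ _ hh_aesm (((hg_meas k).aestronglyMeasurable).sub hh_aesm)
          (IGεk k) (hsq_int k)
      have hexp : ∀ ω, ‖g k ω‖ ^ 2
          = ‖g k ω - G (w k ω + ε k ω)‖ ^ 2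
            + 2 * ⟪G (w k ω + ε k ω), g k ω - G (w k ω + ε k ω)⟫
            + ‖G (w k ω + ε k ω)‖ ^ 2 := by
        intro ω
        have := norm_add_sq_real (g k ω - G (w k ω + ε k ω)) (G (w k ω + ε k ω))
        rw [sub_add_cancel] at this
        rw [this, real_inner_comm]
        try ring
      have hC : Integrable (fun ω => ‖g k ω - G (w k ω + ε k ω)‖ ^ 2
          + 2 * ⟪G (w k ω + ε k ω), g k ω - G (w k ω + ε k ω)⟫) μ :=
        (hsq_int k).add (hIgh.const_mul 2)
      have hsplit : ∫ ω, ‖g k ω‖ ^ 2 ∂μ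
          = (∫ ω, ‖g k ω - G (w k ω + ε k ω)‖ ^ 2 ∂μ)
            + 2 * (∫ ω, ⟪G (w k ω + ε k ω), g k ω - G (w k ω + ε k ω)⟫ ∂μ)
            + ∫ ω, ‖G (w k ω + ε k ω)‖ ^ 2 ∂μ := by
        simp_rw [hexp]
        rw [integral_add hC (IGεk k), integral_add (hsq_int k) (hIgh.const_mul 2),
          integral_const_mul]
      -- the middle term vanishes
      have hmid : ∫ ω, ⟪G (w k ω + ε k ω), g k ω - G (w k ω + ε k ω)⟫ ∂μ = 0 := by
        have e : ∀ ω, ⟪G (w k ω + ε k ω), g k ω - G (w k ω + ε k ω)⟫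
            = ⟪G (w k ω + ε k ω), g k ω⟫
              - ⟪G (w k ω + ε k ω), G (w k ω + ε k ω)⟫ :=
          fun ω => inner_sub_right _ _ _
        simp_rw [e]
        rw [integral_sub (Iinner _ _ hh_aesm (hg_meas k).aestronglyMeasurable
          (IGεk k) (Igk k)) (Iinner _ _ hh_aesm hh_aesm (IGεk k) (IGεk k))]
        have := integral_inner_condexp (hm k) (hXwε k) (hg_int k) hh_aesm
          (hunbiased k) (IGεk k) (Igk k) (IGεk k)
        rw [this, sub_self]
      -- the variance term
      have hvar' : ∫ ω, ‖g k ω - G (w k ω + ε k ω)‖ ^ 2 ∂μ ≤ σ ^ 2 := by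
        have h1 : ∫ ω, (μ[(fun ω' => ‖g k ω' - G (w k ω' + ε k ω')‖ ^ 2)|m k]) ω ∂μ
            = ∫ ω, ‖g k ω - G (w k ω + ε k ω)‖ ^ 2 ∂μ := integral_condExp (hm k)
        have h2 : ∫ ω, (μ[(fun ω' => ‖g k ω' - G (w k ω' + ε k ω')‖ ^ 2)|m k]) ω ∂μ
            ≤ ∫ (_ : Ω), σ ^ 2 ∂μ :=
          integral_mono_ae integrable_condExp (integrable_const _) (hvar k)
        rw [h1, integral_const, probReal_univ] at h2
        simpa using h2
      -- the squared-gradient term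
      have hnorm2 : ∫ ω, ‖G (w k ω + ε k ω)‖ ^ 2 ∂μ
          ≤ 2 * N k + 2 * (β ^ 2 * ρ ^ 2) := by
        have hlow : ∀ᵐ ω ∂μ, ‖G (w k ω + ε k ω)‖ ^ 2
            ≤ 2 * ‖G (w k ω)‖ ^ 2 + 2 * (β ^ 2 * ρ ^ 2) := by
          filter_upwards [hε_bdd k] with ω hω
          have h1 := hsmooth (w k ω + ε k ω) (w k ω)
          rw [add_sub_cancel_left] at h1
          have h2 := norm_sub_norm_le (G (w k ω + ε k ω)) (G (w k ω))
          have h4 : ‖G (w k ω + ε k ω) - G (w k ω)‖ ≤ β * ρ :=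
            h1.trans (mul_le_mul_of_nonneg_left hω hβ.le)
          have h5 : (0:ℝ) ≤ ‖G (w k ω)‖ := norm_nonneg _
          have h6 : (0:ℝ) ≤ ‖G (w k ω + ε k ω)‖ := norm_nonneg _
          have hb : ‖G (w k ω + ε k ω)‖ ≤ ‖G (w k ω)‖ + β * ρ := by linarith
          nlinarith [pow_le_pow_left₀ h6 hb 2, sq_nonneg (‖G (w k ω)‖ - β * ρ)]
        have hD : Integrable (fun ω => 2 * ‖G (w k ω)‖ ^ 2) μ := (IGk k).const_mul 2
        have hE : Integrable (fun ω => 2 * ‖G (w k ω)‖ ^ 2 + 2 * (β ^ 2 * ρ ^ 2)) μ :=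
          hD.add (integrable_const _)
        have := integral_mono_ae (IGεk k) hE hlow
        rwa [integral_add hD (integrable_const _),
          integral_const_mul, integral_const, probReal_univ,
          one_smul] at this
      rw [hsplit, hmid]
      linarith
    -- put things together
    have hQ0 : 0 ≤ ∫ ω, ‖g k ω‖ ^ 2 ∂μ := integral_nonneg fun ω => by positivity
    rw [hcross] at hint
    have hc : (0:ℝ) ≤ β * η ^ 2 / 2 := by positivity
    have hcQ := mul_le_mul_of_nonneg_left hQ hc
    have hN := hNnonneg k
    have hρβ : (0:ℝ) ≤ β ^ 2 * ρ ^ 2 := by positivity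
    have hσ2 : (0:ℝ) ≤ σ ^ 2 := by positivity
    rw [hc2def]
    nlinarith [mul_nonneg (mul_nonneg hη0.le (by linarith : (0:ℝ) ≤ 1/4 - β * η)) hN,
      mul_nonneg (mul_nonneg hη0.le (by linarith : (0:ℝ) ≤ 1/4 - β * η)) hρβ,
      mul_nonneg hη0.le hβ.le]
  -- telescoping
  have tel : ∀ K : ℕ, ∫ ω, L (w K ω) ∂μ + η / 4 * ∑ k ∈ Finset.range K, N k
      ≤ L w0 + K * c2 := by
    intro K
    induction K with
    | zero =>
      simp only [Finset.range_zero, Finset.sum_empty, mul_zero, add_zero,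
        Nat.cast_zero, zero_mul]
      rw [hw0]
      rw [integral_const, probReal_univ]
      simp
    | succ K ih =>
      have hs := step K
      rw [Finset.sum_range_succ]
      push_cast
      have hN := hNnonneg K
      nlinarith
  -- conclusion
  intro K hK
  have hKpos : (0:ℝ) < K := by exact_mod_cast Nat.lt_of_lt_of_le Nat.zero_lt_one hK
  have hLK : Lstar ≤ ∫ ω, L (w K ω) ∂μ := by
    have h1 : ∫ (_ : Ω), Lstar ∂μ ≤ ∫ ω, L (w K ω) ∂μ :=
      integral_mono (integrable_const _) (IL K) fun ω => hbdd _
    rwa [integral_const, probReal_univ, one_smul] at h1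
  have hD : 0 ≤ L w0 - Lstar := by linarith [hbdd w0]
  set S := ∑ k ∈ Finset.range K, N k with hSdef
  have h1 : η / 4 * S ≤ (L w0 - Lstar) + K * c2 := by
    have := tel K
    linarith
  have hgoal : S ≤ 4 * (L w0 - Lstar) / η + K * (3 * β ^ 2 * ρ ^ 2 + 2 * η * β * σ ^ 2) := by
    rw [hc2def] at h1
    have hKc : (0:ℝ) ≤ (K:ℝ) := hKpos.le
    have e : (K:ℝ) * (3 * η / 4 * (β ^ 2 * ρ ^ 2) + β * η ^ 2 / 2 * σ ^ 2)
        = η / 4 * ((K:ℝ) * (3 * β ^ 2 * ρ ^ 2 + 2 * η * β * σ ^ 2)) := by ring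
    rw [e] at h1
    have h2 : η / 4 * S - η / 4 * ((K:ℝ) * (3 * β ^ 2 * ρ ^ 2 + 2 * η * β * σ ^ 2))
        ≤ L w0 - Lstar := by linarith
    have h3 : S - (K:ℝ) * (3 * β ^ 2 * ρ ^ 2 + 2 * η * β * σ ^ 2)
        ≤ 4 * (L w0 - Lstar) / η := by
      rw [le_div_iff₀ hη0]
      nlinarith
    linarith
  rw [one_div, inv_mul_le_iff₀ hKpos]
  have e2 : (K:ℝ) * (4 * (L w0 - Lstar) / (η * K) + 3 * β ^ 2 * ρ ^ 2 + 2 * η * β * σ ^ 2)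
      = 4 * (L w0 - Lstar) / η + K * (3 * β ^ 2 * ρ ^ 2 + 2 * η * β * σ ^ 2) := by
    field_simp
    ring
  rw [e2]
  exact hgoal
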